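/- Let d and ε be real numbers with 0 < ε ≤ d. Then for every real t > 0, ((d+ε)/(2ε))·exp(ε·t) − ((d−ε)/(2ε))·exp(−ε·t) − d·t − 1 > 0 (strict inequality). -/

import Mathlib

lemma exp_lb_quad (x : ℝ) (hx : 0 < x) : 1 + x + x ^ 2 / 2 < Real.exp x := by
  have mono : StrictMonoOn (fun y : ℝ => Real.exp y - (1 + y + y ^ 2 / 2)) (Set.Ici 0) := by
    apply strictMonoOn_of_deriv_pos (convex_Ici 0)
    · fun_prop
    · intro y hy
      rw [interior_Ici] at hy
      have h1 : HasDerivAt (fun y : ℝ => Real.exp y - (1 + y + y ^ 2 / 2))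
          (Real.exp y - (0 + 1 + 2 * y ^ 1 / 2)) y := by
        exact (Real.hasDerivAt_exp y).sub
          (((hasDerivAt_const y (1:ℝ)).add (hasDerivAt_id y)).add
            ((hasDerivAt_pow 2 y).div_const 2))
      rw [h1.deriv]
      have hy' : (0:ℝ) < y := hy
      have := Real.add_one_lt_exp hy'.ne'
      simp only [pow_one]
      linarith
  have h := mono (Set.mem_Ici.mpr le_rfl) (Set.mem_Ici.mpr hx.le) hx
  simpa using h

lemma exp_ub_quad (x : ℝ) (hx : 0 < x) : Real.exp (-x) < 1 - x + x ^ 2 / 2 := by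
  have mono : StrictMonoOn (fun y : ℝ => (1 - y + y ^ 2 / 2) - Real.exp (-y)) (Set.Ici 0) := by
    apply strictMonoOn_of_deriv_pos (convex_Ici 0)
    · fun_prop
    · intro y hy
      rw [interior_Ici] at hy
      have h1 : HasDerivAt (fun y : ℝ => (1 - y + y ^ 2 / 2) - Real.exp (-y))
          ((0 - 1 + 2 * y ^ 1 / 2) - (-Real.exp (-y))) y := by
        refine HasDerivAt.sub ?_ ?_
        · exact ((hasDerivAt_const y (1:ℝ)).sub (hasDerivAt_id y)).add
            ((hasDerivAt_pow 2 y).div_const 2)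
        · simpa [Function.comp_def] using (Real.hasDerivAt_exp (-y)).comp y (hasDerivAt_neg y)
      rw [h1.deriv]
      have hy' : (0:ℝ) < y := hy
      have := Real.add_one_lt_exp (show -y ≠ 0 by intro h; simp at h; linarith)
      simp only [pow_one]
      linarith
  have h := mono (Set.mem_Ici.mpr le_rfl) (Set.mem_Ici.mpr hx.le) hx
  simp only [Set.mem_Ici] at h
  norm_num at h
  linarith

theorem stmt_1 (d ε : ℝ) (hε : 0 < ε) (hεd : ε ≤ d) :
    ∀ t : ℝ, 0 < t →
      (d + ε) / (2 * ε) * Real.exp (ε * t) - (d - ε) / (2 * ε) * Real.exp (-(ε * t))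
        - d * t - 1 > 0 := by
  intro t ht
  set x := ε * t with hxdef
  have hx : 0 < x := mul_pos hε ht
  have ha : 0 < (d + ε) / (2 * ε) := div_pos (by linarith) (by linarith)
  have hb : 0 ≤ (d - ε) / (2 * ε) := by
    apply div_nonneg <;> linarith
  have h1 := mul_lt_mul_of_pos_left (exp_lb_quad x hx) ha
  have h2 := mul_le_mul_of_nonneg_left (exp_ub_quad x hx).le hb
  have key : (d + ε) / (2 * ε) * (1 + x + x ^ 2 / 2)
      - (d - ε) / (2 * ε) * (1 - x + x ^ 2 / 2) - d * t - 1 = x ^ 2 / 2 := by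
    rw [hxdef]
    field_simp
    ring
  have hx2 : 0 < x ^ 2 / 2 := by positivity
  linarith
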